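/- Let N ≥ 1 and let (S_1, G_1), …, (S_{N+1}, G_{N+1}) be random pairs on a probability space (Ω, 𝓕, μ), with S_i real-valued scores and G_i ∈ {0,1} group labels, such that the family ((S_1, G_1), …, (S_{N+1}, G_{N+1})) is exchangeable. Let α ∈ (0,1) and let g ∈ {0,1} satisfy μ(G_{N+1} = g) > 0. For each ω, let I(ω) = { i ∈ {1, …, N} : G_i(ω) = g }, let m(ω) = |I(ω)|, let k(ω) = ⌈(1 − α)(m(ω) + 1)⌉, and define the Mondrian coverage event E_g to consist of those ω such that either k(ω) > m(ω), or S_{N+1}(ω) is at most the k(ω)-th order statistic of the multiset { S_i(ω) : i ∈ I(ω) }. Then μ( E_g ∣ G_{N+1} = g ) ≥ 1 − α. -/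

import Mathlib

open MeasureTheory Finset ENNReal

/-- A finite family of random variables is exchangeable if its joint law is invariant
under permutations of the indices. -/
def Exchangeable {Ω E : Type*} [MeasurableSpace Ω] [MeasurableSpace E]
    (μ : Measure Ω) {M : ℕ} (Z : Fin M → Ω → E) : Prop :=
  ∀ σ : Equiv.Perm (Fin M),
    Measure.map (fun ω => fun i => Z (σ i) ω) μ = Measure.map (fun ω => fun i => Z i ω) μ

/-- The `k`-th order statistic (1-indexed, counted with multiplicity) of the multiset of
values `{s i : i ∈ I}`: the least `x` such that at least `k` of those values are `≤ x`. -/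
noncomputable def orderStatOn {ι : Type*} (I : Finset ι) (s : ι → ℝ) (k : ℕ) : ℝ :=
  sInf {x : ℝ | k ≤ (I.filter fun i => s i ≤ x).card}

lemma card_filter_perm' {M : ℕ} (σ : Equiv.Perm (Fin M)) (P : Fin M → Prop) [DecidablePred P] :
    (univ.filter fun i => P (σ i)).card = (univ.filter P).card := by
  apply Finset.card_bij (fun i _ => σ i)
  · intro a ha; simp only [mem_filter, mem_univ, true_and] at ha ⊢; exact ha
  · intro a _ b _ h; exact σ.injective h
  · intro b hb
    refine ⟨σ.symm b, ?_, by simp⟩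
    simp only [mem_filter, mem_univ, true_and] at hb ⊢
    simpa using hb

lemma bad_card_le' {M : ℕ} (J : Finset (Fin M)) (s : Fin M → ℝ) (k : ℕ)
    (hne : (J.filter fun j => k ≤ (J.filter fun i => s i < s j).card).Nonempty) :
    (J.filter fun j => k ≤ (J.filter fun i => s i < s j).card).card + k ≤ J.card := by
  set T := J.filter fun j => k ≤ (J.filter fun i => s i < s j).card with hT
  obtain ⟨j0, hj0, hmin⟩ := T.exists_min_image s hne
  have hsub : (J.filter fun i => s i < s j0) ⊆ J \ T := by
    intro i hi
    simp only [mem_filter] at hi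
    rw [mem_sdiff]
    exact ⟨hi.1, fun hiT => absurd (hmin i hiT) (not_le.mpr hi.2)⟩
  have hk : k ≤ (J \ T).card :=
    le_trans (mem_filter.mp hj0).2 (card_le_card hsub)
  have hTJ : T ⊆ J := filter_subset _ _
  have h1 := card_sdiff_of_subset hTJ
  have h2 := card_le_card hTJ
  omega

lemma le_orderStatOn' {ι : Type*} (I : Finset ι) (s : ι → ℝ) (k : ℕ) (t : ℝ)
    (hk : 1 ≤ k) (hkm : k ≤ I.card)
    (h : (I.filter fun i => s i < t).card < k) :
    t ≤ orderStatOn I s k := by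
  classical
  have hne : I.Nonempty := card_pos.mp (lt_of_lt_of_le hk hkm)
  apply le_csInf
  · refine ⟨I.sup' hne s, ?_⟩
    have : I.filter (fun i => s i ≤ I.sup' hne s) = I := by
      apply filter_true_of_mem
      intro i hi; exact le_sup' s hi
    simp only [Set.mem_setOf_eq, this]; exact hkm
  · intro x hx
    simp only [Set.mem_setOf_eq] at hx
    by_contra hlt
    push_neg at hlt
    have hsub : (I.filter fun i => s i ≤ x) ⊆ I.filter fun i => s i < t := fun i hi => by
      simp only [mem_filter] at hi ⊢
      exact ⟨hi.1, lt_of_le_of_lt hi.2 hlt⟩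
    exact absurd (le_trans hx (card_le_card hsub)) (not_le.mpr h)

lemma measurable_card_filter {α : Type*} [MeasurableSpace α] {n : ℕ} (p : Fin n → α → Prop)
    [∀ i, DecidablePred (p i)] (hp : ∀ i, MeasurableSet {a | p i a}) :
    Measurable (fun a => (univ.filter fun i => p i a).card) := by
  have : (fun a => (univ.filter fun i => p i a).card)
      = fun a => ∑ i : Fin n, if p i a then 1 else 0 := by
    funext a; rw [Finset.card_filter]
  rw [this]
  exact Finset.measurable_sum _ fun i _ => Measurable.ite (hp i) measurable_const measurable_const

theorem mondrian_two_group_coverage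
    {Ω : Type*} [MeasurableSpace Ω] (μ : Measure Ω) [IsProbabilityMeasure μ]
    (N : ℕ) (hN : 1 ≤ N)
    (S : Fin (N + 1) → Ω → ℝ) (G : Fin (N + 1) → Ω → Fin 2)
    (hSmeas : ∀ i, Measurable (S i)) (hGmeas : ∀ i, Measurable (G i))
    (hexch : Exchangeable μ (fun i ω => (S i ω, G i ω)))
    (α : ℝ) (hα0 : 0 < α) (hα1 : α < 1)
    (g : Fin 2) (hg : 0 < μ {ω | G (Fin.last N) ω = g}) :
    ENNReal.ofReal (1 - α) ≤
      μ ({ω |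
            (Finset.univ.filter fun i : Fin N => G i.castSucc ω = g).card <
              ⌈(1 - α) *
                (((Finset.univ.filter fun i : Fin N => G i.castSucc ω = g).card : ℝ) + 1)⌉₊ ∨
            S (Fin.last N) ω ≤
              orderStatOn (Finset.univ.filter fun i : Fin N => G i.castSucc ω = g)
                (fun i => S i.castSucc ω)
                ⌈(1 - α) *
                  (((Finset.univ.filter fun i : Fin N => G i.castSucc ω = g).card : ℝ) + 1)⌉₊}
          ∩ {ω | G (Fin.last N) ω = g}) /
        μ {ω | G (Fin.last N) ω = g} := by
  classical
  set Z : Ω → (Fin (N + 1) → ℝ × Fin 2) := fun ω i => (S i ω, G i ω) with hZdef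
  have hZ : Measurable Z :=
    measurable_pi_lambda _ fun i => (hSmeas i).prod (hGmeas i)
  -- path-space quantities
  set Mz : (Fin (N + 1) → ℝ × Fin 2) → ℕ := fun z => (univ.filter fun i => (z i).2 = g).card with hMz
  set kz : (Fin (N + 1) → ℝ × Fin 2) → ℕ := fun z => ⌈(1 - α) * (Mz z : ℝ)⌉₊ with hkz
  set cnt : (Fin (N + 1) → ℝ × Fin 2) → Fin (N + 1) → ℕ :=
    fun z j => (univ.filter fun i => (z i).2 = g ∧ (z i).1 < (z j).1).card with hcnt
  set Bad : Fin (N + 1) → Set (Fin (N + 1) → ℝ × Fin 2) := fun j => {z | (z j).2 = g ∧ kz z ≤ cnt z j} with hBad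
  -- measurability
  have hMzMeas : Measurable Mz := by
    apply measurable_card_filter
    intro i
    exact (measurable_pi_apply i).snd (MeasurableSet.singleton g)
  have hcntMeas : ∀ j, Measurable fun z => cnt z j := by
    intro j
    apply measurable_card_filter
    intro i
    have h1 : MeasurableSet {z : Fin (N + 1) → ℝ × Fin 2 | (z i).2 = g} :=
      (measurable_pi_apply i).snd (MeasurableSet.singleton g)
    have h2 : MeasurableSet {z : Fin (N + 1) → ℝ × Fin 2 | (z i).1 < (z j).1} :=
      measurableSet_lt ((measurable_pi_apply i).fst) ((measurable_pi_apply j).fst)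
    exact h1.inter h2
  have hkzMeas : Measurable kz :=
    (measurable_from_top (f := fun n : ℕ => ⌈(1 - α) * (n : ℝ)⌉₊)).comp hMzMeas
  have hBadMeas : ∀ j, MeasurableSet (Bad j) := by
    intro j
    apply MeasurableSet.inter
    · exact (measurable_pi_apply j).snd (MeasurableSet.singleton g)
    · exact (hkzMeas.prodMk (hcntMeas j))
        ((Set.to_countable {p : ℕ × ℕ | p.1 ≤ p.2}).measurableSet)
  -- exchangeability transfer
  have key : ∀ (A : Set (Fin (N + 1) → ℝ × Fin 2)), MeasurableSet A → ∀ σ : Equiv.Perm (Fin (N + 1)),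
      μ (Z ⁻¹' ((fun z => z ∘ σ) ⁻¹' A)) = μ (Z ⁻¹' A) := by
    intro A hA σ
    have hmeas1 : Measurable (fun ω => fun i => (S (σ i) ω, G (σ i) ω)) :=
      measurable_pi_lambda _ fun i => (hSmeas (σ i)).prod (hGmeas (σ i))
    have h1 : Z ⁻¹' ((fun z => z ∘ σ) ⁻¹' A)
        = (fun ω => fun i => (S (σ i) ω, G (σ i) ω)) ⁻¹' A := rfl
    rw [h1, ← Measure.map_apply hmeas1 hA, hexch σ, Measure.map_apply hZ hA]

  -- abbreviations
  set P : Set Ω := {ω | G (Fin.last N) ω = g} with hPdef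
  set B : Set Ω := Z ⁻¹' Bad (Fin.last N) with hBdef
  -- laws of Bad j all agree
  have hBadswap : ∀ j : Fin (N + 1), Bad j =
      (fun z : Fin (N + 1) → ℝ × Fin 2 => z ∘ Equiv.swap j (Fin.last N)) ⁻¹' Bad (Fin.last N) := by
    intro j
    ext z
    have hσlast : (Equiv.swap j (Fin.last N)) (Fin.last N) = j := Equiv.swap_apply_right _ _
    have hM : Mz (z ∘ Equiv.swap j (Fin.last N)) = Mz z := by
      simp only [hMz, Function.comp_apply]
      exact card_filter_perm' (Equiv.swap j (Fin.last N)) (fun i => (z i).2 = g)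
    have hc : cnt (z ∘ Equiv.swap j (Fin.last N)) (Fin.last N) = cnt z j := by
      simp only [hcnt, Function.comp_apply, hσlast]
      exact card_filter_perm' (Equiv.swap j (Fin.last N))
        (fun i => (z i).2 = g ∧ (z i).1 < (z j).1)
    simp only [hBad, Set.mem_preimage, Set.mem_setOf_eq, Function.comp_apply, hσlast,
      hkz, hM, hc]
  have hmuBad : ∀ j, μ (Z ⁻¹' Bad j) = μ B := by
    intro j
    rw [hBdef, hBadswap j]
    exact key _ (hBadMeas _) _
  -- laws of {G j = g} all agree
  have hGsetMeas : ∀ j : Fin (N + 1),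
      MeasurableSet {z : Fin (N + 1) → ℝ × Fin 2 | (z j).2 = g} := fun j =>
    (measurable_pi_apply j).snd (MeasurableSet.singleton g)
  have hmuG : ∀ j, μ {ω | G j ω = g} = μ P := by
    intro j
    have h1 : {ω | G j ω = g} = Z ⁻¹' ((fun z : Fin (N + 1) → ℝ × Fin 2 =>
        z ∘ Equiv.swap j (Fin.last N)) ⁻¹' {z | (z (Fin.last N)).2 = g}) := by
      ext ω
      simp [Equiv.swap_apply_right]
      exact Iff.rfl
    rw [h1, key _ (hGsetMeas (Fin.last N)) _]
    rfl
  -- pointwise counting bound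
  have hptwise : ∀ z : Fin (N + 1) → ℝ × Fin 2,
      ((univ.filter fun j => z ∈ Bad j).card : ℝ≥0∞) ≤ ENNReal.ofReal α * (Mz z : ℝ≥0∞) := by
    intro z
    set J : Finset (Fin (N + 1)) := univ.filter fun i => (z i).2 = g with hJ
    set T : Finset (Fin (N + 1)) :=
      J.filter fun j => kz z ≤ (J.filter fun i => (z i).1 < (z j).1).card with hT
    have hcnt' : ∀ j, cnt z j = (J.filter fun i => (z i).1 < (z j).1).card := by
      intro j
      simp only [hcnt, hJ, Finset.filter_filter]
    have hTeq : (univ.filter fun j => z ∈ Bad j) = T := by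
      ext j
      simp only [hT, hJ, Finset.mem_filter, Finset.mem_univ, true_and, hBad,
        Set.mem_setOf_eq, hcnt' j, Finset.filter_filter]
    have hJcard : J.card = Mz z := by simp [hJ, hMz]
    rw [hTeq]
    rcases T.eq_empty_or_nonempty with h | h
    · simp [h]
    · have hcard := bad_card_le' J (fun i => (z i).1) (kz z) h
      have hkge : (1 - α) * (Mz z : ℝ) ≤ (kz z : ℝ) := Nat.le_ceil _
      have hreal : (T.card : ℝ) ≤ α * (Mz z : ℝ) := by
        have h2 : (T.card : ℝ) + (kz z : ℝ) ≤ (Mz z : ℝ) := by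
          rw [← hJcard]; exact_mod_cast hcard
        nlinarith
      calc (T.card : ℝ≥0∞) = ENNReal.ofReal (T.card : ℝ) := by
            rw [ENNReal.ofReal_natCast]
        _ ≤ ENNReal.ofReal (α * (Mz z : ℝ)) := ENNReal.ofReal_le_ofReal hreal
        _ = ENNReal.ofReal α * ENNReal.ofReal ((Mz z : ℕ) : ℝ) := ENNReal.ofReal_mul hα0.le
        _ = ENNReal.ofReal α * (Mz z : ℝ≥0∞) := by rw [ENNReal.ofReal_natCast]
  -- indicator sums
  have hsumBad : ∀ ω, ∑ j : Fin (N + 1), (Z ⁻¹' Bad j).indicator (1 : Ω → ℝ≥0∞) ω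
      = ((univ.filter fun j => Z ω ∈ Bad j).card : ℝ≥0∞) := by
    intro ω
    rw [Finset.card_filter, Nat.cast_sum]
    apply Finset.sum_congr rfl
    intro j _
    by_cases h : Z ω ∈ Bad j <;> simp [Set.indicator, h]
  have hsumG : ∀ ω, ∑ j : Fin (N + 1), ({ω' | G j ω' = g}).indicator (1 : Ω → ℝ≥0∞) ω
      = ((Mz (Z ω) : ℕ) : ℝ≥0∞) := by
    intro ω
    have : Mz (Z ω) = (univ.filter fun j : Fin (N + 1) => G j ω = g).card := rfl
    rw [this, Finset.card_filter, Nat.cast_sum]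
    apply Finset.sum_congr rfl
    intro j _
    by_cases h : G j ω = g <;> simp [Set.indicator, h]
  -- integrate
  have hMZmeas : Measurable fun ω => ((Mz (Z ω) : ℕ) : ℝ≥0∞) :=
    (measurable_from_top (f := fun n : ℕ => (n : ℝ≥0∞))).comp (hMzMeas.comp hZ)
  have hintB : ∑ j : Fin (N + 1), μ (Z ⁻¹' Bad j)
      = ∫⁻ ω, ((univ.filter fun j => Z ω ∈ Bad j).card : ℝ≥0∞) ∂μ := by
    have h1 : ∀ j : Fin (N + 1), μ (Z ⁻¹' Bad j)
        = ∫⁻ ω, (Z ⁻¹' Bad j).indicator (1 : Ω → ℝ≥0∞) ω ∂μ := by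
      intro j
      rw [lintegral_indicator_one (hZ (hBadMeas j))]
    simp_rw [h1]
    rw [← lintegral_finset_sum]
    · simp_rw [hsumBad]
    · intro j _
      exact measurable_one.indicator (hZ (hBadMeas j))
  have hintG : ∑ j : Fin (N + 1), μ {ω | G j ω = g}
      = ∫⁻ ω, ((Mz (Z ω) : ℕ) : ℝ≥0∞) ∂μ := by
    have h1 : ∀ j : Fin (N + 1), μ {ω | G j ω = g}
        = ∫⁻ ω, ({ω' | G j ω' = g}).indicator (1 : Ω → ℝ≥0∞) ω ∂μ := by
      intro j
      have hset : MeasurableSet {ω' | G j ω' = g} :=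
        (hGmeas j) (MeasurableSet.singleton g)
      rw [lintegral_indicator_one hset]
    simp_rw [h1]
    rw [← lintegral_finset_sum]
    · simp_rw [hsumG]
    · intro j _
      exact measurable_one.indicator ((hGmeas j) (MeasurableSet.singleton g))
  have hmain : (↑(N + 1) : ℝ≥0∞) * μ B ≤ ENNReal.ofReal α * ((↑(N + 1) : ℝ≥0∞) * μ P) := by
    have lhs : ∑ j : Fin (N + 1), μ (Z ⁻¹' Bad j) = (↑(N + 1) : ℝ≥0∞) * μ B := by
      rw [Finset.sum_congr rfl fun j _ => hmuBad j, Finset.sum_const, Finset.card_univ,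
        Fintype.card_fin, nsmul_eq_mul]
    have rhs : ∑ j : Fin (N + 1), μ {ω | G j ω = g} = (↑(N + 1) : ℝ≥0∞) * μ P := by
      rw [Finset.sum_congr rfl fun j _ => hmuG j, Finset.sum_const, Finset.card_univ,
        Fintype.card_fin, nsmul_eq_mul]
    calc (↑(N + 1) : ℝ≥0∞) * μ B = ∑ j : Fin (N + 1), μ (Z ⁻¹' Bad j) := lhs.symm
      _ = ∫⁻ ω, ((univ.filter fun j => Z ω ∈ Bad j).card : ℝ≥0∞) ∂μ := hintB
      _ ≤ ∫⁻ ω, ENNReal.ofReal α * ((Mz (Z ω) : ℕ) : ℝ≥0∞) ∂μ :=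
          lintegral_mono fun ω => hptwise (Z ω)
      _ = ENNReal.ofReal α * ∫⁻ ω, ((Mz (Z ω) : ℕ) : ℝ≥0∞) ∂μ :=
          lintegral_const_mul _ hMZmeas
      _ = ENNReal.ofReal α * ((↑(N + 1) : ℝ≥0∞) * μ P) := by rw [← hintG, rhs]
  have hBbound : μ B ≤ ENNReal.ofReal α * μ P := by
    have hne0 : (↑(N + 1) : ℝ≥0∞) ≠ 0 := by
      simp
    have hnetop : (↑(N + 1) : ℝ≥0∞) ≠ ⊤ := by
      simp
    rw [← ENNReal.mul_le_mul_iff_right hne0 hnetop]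
    calc (↑(N + 1) : ℝ≥0∞) * μ B
        ≤ ENNReal.ofReal α * ((↑(N + 1) : ℝ≥0∞) * μ P) := hmain
      _ = (↑(N + 1) : ℝ≥0∞) * (ENNReal.ofReal α * μ P) := by ring
  -- the inclusion P \ B ⊆ goal set ∩ P
  have hsubset : P \ B ⊆
      ({ω |
            (Finset.univ.filter fun i : Fin N => G i.castSucc ω = g).card <
              ⌈(1 - α) *
                (((Finset.univ.filter fun i : Fin N => G i.castSucc ω = g).card : ℝ) + 1)⌉₊ ∨
            S (Fin.last N) ω ≤
              orderStatOn (Finset.univ.filter fun i : Fin N => G i.castSucc ω = g)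
                (fun i => S i.castSucc ω)
                ⌈(1 - α) *
                  (((Finset.univ.filter fun i : Fin N => G i.castSucc ω = g).card : ℝ) + 1)⌉₊}
        ∩ P) := by
    rintro ω ⟨hP, hnB⟩
    refine ⟨?_, hP⟩
    have hPω : G (Fin.last N) ω = g := hP
    simp only [Set.mem_setOf_eq]
    set I : Finset (Fin N) := univ.filter fun i => G i.castSucc ω = g with hIdef
    set m : ℕ := I.card with hm
    set k : ℕ := ⌈(1 - α) * ((m : ℝ) + 1)⌉₊ with hk
    have hMzω : Mz (Z ω) = m + 1 := by
      simp only [hMz, hZdef, hm, hIdef]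
      rw [Finset.card_filter, Finset.card_filter, Fin.sum_univ_castSucc]
      simp [hPω]
    have hkzω : kz (Z ω) = k := by
      simp only [hkz, hMzω, hk]
      norm_num
    have hcntω : cnt (Z ω) (Fin.last N)
        = (I.filter fun i => S i.castSucc ω < S (Fin.last N) ω).card := by
      simp only [hcnt, hZdef, hIdef, Finset.filter_filter]
      rw [Finset.card_filter, Finset.card_filter, Fin.sum_univ_castSucc]
      simp [hPω]
    have hlt : (I.filter fun i => S i.castSucc ω < S (Fin.last N) ω).card < k := by
      by_contra hcon
      push_neg at hcon
      exact hnB ⟨hPω, by rw [hkzω, hcntω]; exact hcon⟩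
    by_cases hkm : m < k
    · left; exact hkm
    · right
      push_neg at hkm
      apply le_orderStatOn' I _ k _ _ hkm hlt
      rw [hk, Nat.one_le_ceil_iff]
      have hpos : 0 < 1 - α := by linarith
      exact mul_pos hpos (Nat.cast_add_one_pos m)
  -- final arithmetic
  rw [ENNReal.le_div_iff_mul_le (Or.inl hg.ne') (Or.inl (measure_ne_top μ _))]
  have hPsplit : ENNReal.ofReal (1 - α) * μ P + ENNReal.ofReal α * μ P = μ P := by
    rw [← add_mul, ← ENNReal.ofReal_add (by linarith) hα0.le]
    norm_num
  calc ENNReal.ofReal (1 - α) * μ P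
      ≤ μ P - ENNReal.ofReal α * μ P := ENNReal.le_sub_of_add_le_right (by finiteness) hPsplit.le
    _ ≤ μ P - μ B := tsub_le_tsub_left hBbound _
    _ ≤ μ (P \ B) := by
        rw [tsub_le_iff_right]
        exact le_trans (measure_mono (Set.subset_diff_union P B)) (measure_union_le _ _)
    _ ≤ _ := measure_mono hsubset
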